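/- Let y⋆ ∈ [2,3], α ∈ (1.9, 2), C ≥ 4, and let N ≥ 5 be a natural number. Let (a_k)_{k≥0} and (b_k)_{k≥0} be complex sequences with |a₀| ≤ 1/y⋆, |b₀| ≤ 1/y⋆, |a₁| + |b₁| ≤ 1 − 1/y⋆, and |a_k| ≤ C^{k−α}/k², |b_k| ≤ C^{k−α}/k² for all integers k with 2 ≤ k ≤ N−1. Then for every integer ℓ with 4 ≤ ℓ ≤ N−1: | Σ_{k=0}^{ℓ} a_k b_{ℓ−k} | ≤ D · C^{ℓ−α}/ℓ², where D := 2/y⋆ + (1 − 1/y⋆)·16/(9C) + 7/(4C^{α}). -/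

import Mathlib

open Finset

lemma S2bound : ∀ l : ℕ, 4 ≤ l →
    ∑ k ∈ Icc 2 (l-2), (1:ℝ)/(k:ℝ)^2 ≤ 13/20 - 1/((l:ℝ)-3/2) := by
  intro l hl
  induction l, hl using Nat.le_induction with
  | base => norm_num
  | succ n hn ih =>
    have h1 : n + 1 - 2 = (n-2) + 1 := by omega
    rw [h1, Finset.sum_Icc_succ_top (by omega : 2 ≤ (n-2)+1)]
    have hc : (((n-2:ℕ)+1 : ℕ) : ℝ) = (n:ℝ) - 1 := by
      have : ((n-2:ℕ):ℝ) = (n:ℝ) - 2 := by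
        push_cast [Nat.cast_sub (by omega : 2 ≤ n)]; ring
      push_cast [this]; ring
    rw [hc]
    have hn4 : (4:ℝ) ≤ (n:ℝ) := by exact_mod_cast hn
    have hA : ((n:ℝ)-3/2) ≠ 0 := by nlinarith
    have hB : ((n:ℝ)+1-3/2) ≠ 0 := by nlinarith
    have he : 1/((n:ℝ)-3/2) - 1/(((n:ℝ)+1)-3/2) = 1/(((n:ℝ)-3/2)*((n:ℝ)-1/2)) := by
      rw [div_sub_div _ _ hA hB,
        show (1*(((n:ℝ)+1)-3/2) - ((n:ℝ)-3/2)*1) = 1 from by ring,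
        show ((n:ℝ)-3/2)*(((n:ℝ)+1)-3/2) = ((n:ℝ)-3/2)*((n:ℝ)-1/2) from by ring]
    have key : 1/((n:ℝ)-1)^2 ≤ 1/((n:ℝ)-3/2) - 1/(((n:ℝ)+1)-3/2) := by
      rw [he]
      apply one_div_le_one_div_of_le (by nlinarith) (by nlinarith)
    push_cast
    linarith [ih]

lemma reflSum (l : ℕ) (hl : 4 ≤ l) (g : ℕ → ℝ) :
    ∑ k ∈ Icc 2 (l-2), g (l-k) = ∑ k ∈ Icc 2 (l-2), g k := by
  apply Finset.sum_nbij' (fun k => l - k) (fun k => l - k) <;>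
    (intro a ha; simp only [Finset.mem_Icc] at *) <;> first | omega | (congr 1; omega)

set_option maxHeartbeats 2000000 in
lemma midSum (l : ℕ) (hl : 4 ≤ l) :
    ∑ k ∈ Icc 2 (l-2), (1:ℝ)/((k:ℝ)^2*((l:ℝ)-(k:ℝ))^2) ≤ 7/(4*(l:ℝ)^2) := by
  rcases le_or_gt l 48 with h48 | h49
  · have hq : (∑ k ∈ Finset.Icc (2:ℕ) (l-2), (1:ℚ)/((k:ℚ)^2*((l:ℚ)-(k:ℚ))^2)) ≤ 7/(4*(l:ℚ)^2) := by
      interval_cases l <;> norm_num [Finset.sum_Icc_succ_top]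
    have := (Rat.cast_le (K := ℝ)).2 hq
    push_cast at this
    convert this using 2
  · set s := Icc 2 (l-2) with hs
    set x := (l:ℝ) with hx
    have h49' : (49:ℕ) ≤ l := h49
    have hx49 : (49:ℝ) ≤ x := by rw [hx]; exact_mod_cast h49'
    have hxpos : 0 < x := by linarith
    have hcast : ∀ k ∈ s, ((l - k : ℕ) : ℝ) = x - k := by
      intro k hk; simp only [hs, Finset.mem_Icc] at hk
      push_cast [Nat.cast_sub (by omega : k ≤ l)]; ring
    have hT1 : ∑ k ∈ s, (1:ℝ)/(x - k) = ∑ k ∈ s, 1/(k:ℝ) := by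
      rw [show ∑ k ∈ s, (1:ℝ)/(x-k) = ∑ k ∈ s, (1:ℝ)/((l-k:ℕ):ℝ) from
        Finset.sum_congr rfl (fun k hk => by rw [hcast k hk])]
      exact reflSum l hl (fun m => 1/(m:ℝ))
    have hT2 : ∑ k ∈ s, (1:ℝ)/(x - k)^2 = ∑ k ∈ s, 1/(k:ℝ)^2 := by
      rw [show ∑ k ∈ s, (1:ℝ)/(x-k)^2 = ∑ k ∈ s, (1:ℝ)/((l-k:ℕ):ℝ)^2 from
        Finset.sum_congr rfl (fun k hk => by rw [hcast k hk])]
      exact reflSum l hl (fun m => 1/(m:ℝ)^2)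
    have hpt : ∀ k ∈ s, (1:ℝ)/((k:ℝ)^2*(x-k)^2)
        = (1/x^2)*(1/(k:ℝ)^2) + (1/x^2)*(1/(x-k)^2) + (2/x^3)*(1/(k:ℝ)) + (2/x^3)*(1/(x-k)) := by
      intro k hk; simp only [hs, Finset.mem_Icc] at hk
      have hk2 : (2:ℝ) ≤ (k:ℝ) := by exact_mod_cast hk.1
      have hku : (k:ℝ) ≤ x - 2 := by
        have : (k:ℝ) ≤ ((l-2:ℕ):ℝ) := by exact_mod_cast hk.2
        rw [Nat.cast_sub (by omega : 2 ≤ l)] at this; push_cast at this ⊢; linarith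
      have h1 : (0:ℝ) < (k:ℝ) := by linarith
      have h2 : (0:ℝ) < x - k := by linarith
      field_simp
      ring
    rw [Finset.sum_congr rfl hpt]
    simp only [Finset.sum_add_distrib, ← Finset.mul_sum]
    rw [hT1, hT2]
    set S2 := ∑ k ∈ s, (1:ℝ)/(k:ℝ)^2 with hS2
    set S1 := ∑ k ∈ s, (1:ℝ)/(k:ℝ) with hS1
    have hS2nn : 0 ≤ S2 := Finset.sum_nonneg (fun k _ => by positivity)
    have hS1nn : 0 ≤ S1 := Finset.sum_nonneg (fun k _ => by positivity)
    have hS2le : S2 ≤ 13/20 := by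
      have := S2bound l hl
      have : (0:ℝ) < x - 3/2 := by linarith
      have h2 := S2bound l hl
      have h3 : 0 < 1/((l:ℝ)-3/2) := by rw [← hx] at *; positivity
      rw [← hx] at h2; linarith
    have hcard : (s.card : ℝ) = x - 3 := by
      rw [hs, Nat.card_Icc]
      rw [show (l - 2 + 1 - 2 : ℕ) = l - 3 by omega, Nat.cast_sub (by omega : 3 ≤ l)]
      push_cast; ring
    have hCS : S1^2 ≤ (x-3) * S2 := by
      have := sq_sum_le_card_mul_sum_sq (s := s) (f := fun k => (1:ℝ)/(k:ℝ))
      rw [hcard] at this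
      calc S1^2 ≤ (x-3) * ∑ k ∈ s, ((1:ℝ)/(k:ℝ))^2 := this
        _ = (x-3) * S2 := by rw [hS2]; congr 1; exact Finset.sum_congr rfl (fun k _ => by rw [one_div, ← one_div, div_pow, one_pow])
    have hS1le : S1 ≤ 9/80 * x := by
      nlinarith [hCS, hS2le, hS1nn, sq_nonneg (S1 - 9/80*x)]
    have h1 : (2/x^3)*S1 ≤ (2/x^3)*(9/80*x) := mul_le_mul_of_nonneg_left hS1le (by positivity)
    have h2 : (1/x^2)*S2 ≤ (1/x^2)*(13/20) := mul_le_mul_of_nonneg_left hS2le (by positivity)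
    have hxne : x ≠ 0 := by positivity
    have e1 : (1/x^2)*(13/20) + (1/x^2)*(13/20) + (2/x^3)*(9/80*x) + (2/x^3)*(9/80*x) = 7/(4*x^2) := by
      field_simp
      ring
    linarith [h1, h2]

set_option maxHeartbeats 1000000 in
/-- Cauchy-product (convolution) estimate for the Taylor coefficients of the
Larson–Penston profile at the sonic point. -/
theorem cauchy_product_bound
    (ystar : ℝ) (hy1 : 2 ≤ ystar) (hy2 : ystar ≤ 3)
    (α : ℝ) (hα1 : (1.9:ℝ) < α) (hα2 : α < 2)
    (C : ℝ) (hC : 4 ≤ C)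
    (N : ℕ) (hN : 5 ≤ N)
    (a b : ℕ → ℂ)
    (ha0 : ‖a 0‖ ≤ 1 / ystar) (hb0 : ‖b 0‖ ≤ 1 / ystar)
    (hab1 : ‖a 1‖ + ‖b 1‖ ≤ 1 - 1 / ystar)
    (ha : ∀ k : ℕ, 2 ≤ k → k ≤ N - 1 → ‖a k‖ ≤ C ^ ((k:ℝ) - α) / (k:ℝ) ^ 2)
    (hb : ∀ k : ℕ, 2 ≤ k → k ≤ N - 1 → ‖b k‖ ≤ C ^ ((k:ℝ) - α) / (k:ℝ) ^ 2) :
    ∀ l : ℕ, 4 ≤ l → l ≤ N - 1 →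
      ‖∑ k ∈ Finset.range (l + 1), a k * b (l - k)‖ ≤
        (2 / ystar + (1 - 1 / ystar) * 16 / (9 * C) + 7 / (4 * C ^ α))
          * (C ^ ((l:ℝ) - α) / (l:ℝ) ^ 2) := by
  intro l hl4 hlN
  have hC0 : (0:ℝ) < C := by linarith
  have hy0 : (0:ℝ) < ystar := by linarith
  have hx4 : (4:ℝ) ≤ (l:ℝ) := by exact_mod_cast hl4
  have hx0 : (0:ℝ) < (l:ℝ) := by linarith
  set x : ℝ := (l:ℝ) with hxdef
  set R : ℝ := C ^ (x - α) / x ^ 2 with hRdef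
  have hRpos : 0 < R := by
    rw [hRdef]
    have := Real.rpow_pos_of_pos hC0 (x - α)
    positivity
  have hCα : 0 < C ^ α := Real.rpow_pos_of_pos hC0 α
  have hP : 0 < C ^ (x - α) := Real.rpow_pos_of_pos hC0 (x - α)
  -- split of index set
  have hset : Finset.range (l+1)
      = insert 0 (insert 1 (insert (l-1) (insert l (Finset.Icc 2 (l-2))))) := by
    ext k
    simp only [Finset.mem_range, Finset.mem_insert, Finset.mem_Icc]
    omega
  set M : ℝ := ∑ k ∈ Finset.Icc 2 (l-2), ‖a k‖ * ‖b (l-k)‖ with hMdef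
  have hsum : ∑ k ∈ Finset.range (l+1), ‖a k‖ * ‖b (l-k)‖
      = ‖a 0‖ * ‖b l‖ + ‖a 1‖ * ‖b (l-1)‖ + ‖a (l-1)‖ * ‖b 1‖ + ‖a l‖ * ‖b 0‖ + M := by
    rw [hset, Finset.sum_insert (by simp only [Finset.mem_insert, Finset.mem_Icc]; omega),
      Finset.sum_insert (by simp only [Finset.mem_insert, Finset.mem_Icc]; omega),
      Finset.sum_insert (by simp only [Finset.mem_insert, Finset.mem_Icc]; omega),
      Finset.sum_insert (by simp only [Finset.mem_Icc]; omega)]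
    rw [Nat.sub_zero, Nat.sub_self, show l - (l-1) = 1 from by omega]
    ring
  -- k = 0 and k = l terms
  have hbl : ‖b l‖ ≤ C ^ (x - α) / x ^ 2 := hb l (by omega) hlN
  have hal : ‖a l‖ ≤ C ^ (x - α) / x ^ 2 := ha l (by omega) hlN
  have t0 : ‖a 0‖ * ‖b l‖ ≤ (1/ystar) * R :=
    mul_le_mul ha0 hbl (norm_nonneg _) (by positivity)
  have tl : ‖a l‖ * ‖b 0‖ ≤ R * (1/ystar) :=
    mul_le_mul hal hb0 (norm_nonneg _) (by positivity)
  -- k = 1 and k = l-1 terms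
  have hcast1 : ((l-1:ℕ):ℝ) = x - 1 := by
    rw [hxdef, Nat.cast_sub (by omega : 1 ≤ l)]; norm_num
  set E : ℝ := C ^ ((x-1) - α) / (x-1) ^ 2 with hEdef
  have hEpos : 0 < E := by
    rw [hEdef]
    have := Real.rpow_pos_of_pos hC0 ((x-1) - α)
    have : (0:ℝ) < x - 1 := by linarith
    positivity
  have hbl1 : ‖b (l-1)‖ ≤ E := by
    have h := hb (l-1) (by omega) (by omega)
    rwa [hcast1] at h
  have hal1 : ‖a (l-1)‖ ≤ E := by
    have h := ha (l-1) (by omega) (by omega)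
    rwa [hcast1] at h
  have t12 : ‖a 1‖ * ‖b (l-1)‖ + ‖a (l-1)‖ * ‖b 1‖ ≤ (1 - 1/ystar) * E := by
    calc ‖a 1‖ * ‖b (l-1)‖ + ‖a (l-1)‖ * ‖b 1‖
        ≤ ‖a 1‖ * E + E * ‖b 1‖ :=
          add_le_add (mul_le_mul_of_nonneg_left hbl1 (norm_nonneg _))
            (mul_le_mul_of_nonneg_right hal1 (norm_nonneg _))
      _ = (‖a 1‖ + ‖b 1‖) * E := by ring
      _ ≤ (1 - 1/ystar) * E := mul_le_mul_of_nonneg_right hab1 hEpos.le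
  have hE : (1 - 1/ystar) * E ≤ (1 - 1/ystar) * 16 / (9*C) * R := by
    have hy' : (0:ℝ) ≤ 1 - 1/ystar := by
      have : 1/ystar ≤ 1/2 := by
        apply one_div_le_one_div_of_le <;> linarith
      linarith
    have hpow : C ^ ((x-1) - α) = C ^ (x - α) / C := by
      rw [show (x-1) - α = (x - α) - 1 from by ring, Real.rpow_sub hC0, Real.rpow_one]
    have hEle : E ≤ 16 / (9*C) * R := by
      have hx1 : (0:ℝ) < x - 1 := by linarith
      rw [hEdef, hRdef, hpow, div_div,
        show 16/(9*C)*(C^(x-α)/x^2) = (16*C^(x-α))/(9*(C*x^2)) from by ring,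
        div_le_div_iff₀ (by positivity) (by positivity)]
      nlinarith [mul_nonneg (mul_nonneg hP.le hC0.le)
        (mul_nonneg (by linarith : (0:ℝ) ≤ x - 4) (by linarith : (0:ℝ) ≤ 7*x - 4))]
    calc (1 - 1/ystar) * E ≤ (1 - 1/ystar) * (16 / (9*C) * R) :=
          mul_le_mul_of_nonneg_left hEle hy'
      _ = (1 - 1/ystar) * 16 / (9*C) * R := by ring
  -- middle terms
  have hM : M ≤ 7 / (4 * C ^ α) * R := by
    have hterm : ∀ k ∈ Finset.Icc 2 (l-2), ‖a k‖ * ‖b (l-k)‖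
        ≤ (C ^ (x - α) / C ^ α) * (1/((k:ℝ)^2 * (x - (k:ℝ))^2)) := by
      intro k hk
      rw [Finset.mem_Icc] at hk
      have hkl : (k:ℝ) ≤ x - 2 := by
        have : ((k:ℕ):ℝ) ≤ ((l-2:ℕ):ℝ) := by exact_mod_cast hk.2
        rw [Nat.cast_sub (by omega : 2 ≤ l)] at this
        push_cast at this ⊢
        rw [hxdef]; linarith
      have hk2 : (2:ℝ) ≤ (k:ℝ) := by exact_mod_cast hk.1
      have hcastk : ((l-k:ℕ):ℝ) = x - (k:ℝ) := by
        rw [Nat.cast_sub (by omega : k ≤ l), hxdef]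
      have hak : ‖a k‖ ≤ C ^ ((k:ℝ) - α) / (k:ℝ)^2 := ha k hk.1 (by omega)
      have hbk : ‖b (l-k)‖ ≤ C ^ ((x - (k:ℝ)) - α) / (x - (k:ℝ))^2 := by
        have h := hb (l-k) (by omega) (by omega)
        rwa [hcastk] at h
      have hmul : C ^ ((k:ℝ) - α) * C ^ ((x - (k:ℝ)) - α) = C ^ (x - α) / C ^ α := by
        rw [← Real.rpow_add hC0, ← Real.rpow_sub hC0]
        ring_nf
      calc ‖a k‖ * ‖b (l-k)‖
          ≤ (C ^ ((k:ℝ) - α) / (k:ℝ)^2) * (C ^ ((x - (k:ℝ)) - α) / (x - (k:ℝ))^2) := by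
            apply mul_le_mul hak hbk (norm_nonneg _) ?_
            have := Real.rpow_pos_of_pos hC0 ((k:ℝ) - α)
            positivity
        _ = (C ^ (x - α) / C ^ α) * (1/((k:ℝ)^2 * (x - (k:ℝ))^2)) := by
            rw [div_mul_div_comm, hmul]
            ring
    calc M ≤ ∑ k ∈ Finset.Icc 2 (l-2), (C ^ (x - α) / C ^ α) * (1/((k:ℝ)^2 * (x - (k:ℝ))^2)) :=
          Finset.sum_le_sum hterm
      _ = (C ^ (x - α) / C ^ α) * ∑ k ∈ Finset.Icc 2 (l-2), (1:ℝ)/((k:ℝ)^2 * (x - (k:ℝ))^2) := by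
          rw [Finset.mul_sum]
      _ ≤ (C ^ (x - α) / C ^ α) * (7/(4*x^2)) := by
          apply mul_le_mul_of_nonneg_left _ (by positivity)
          rw [hxdef]
          exact midSum l hl4
      _ = 7 / (4 * C ^ α) * R := by rw [hRdef]; field_simp
  -- assemble
  calc ‖∑ k ∈ Finset.range (l + 1), a k * b (l - k)‖
      ≤ ∑ k ∈ Finset.range (l + 1), ‖a k * b (l - k)‖ := norm_sum_le _ _
    _ = ∑ k ∈ Finset.range (l + 1), ‖a k‖ * ‖b (l - k)‖ := by
        exact Finset.sum_congr rfl (fun k _ => norm_mul _ _)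
    _ = ‖a 0‖ * ‖b l‖ + ‖a 1‖ * ‖b (l-1)‖ + ‖a (l-1)‖ * ‖b 1‖ + ‖a l‖ * ‖b 0‖ + M := hsum
    _ ≤ (2 / ystar + (1 - 1 / ystar) * 16 / (9 * C) + 7 / (4 * C ^ α)) * R := by
        have hexp : (2 / ystar + (1 - 1 / ystar) * 16 / (9 * C) + 7 / (4 * C ^ α)) * R
            = (1/ystar) * R + R * (1/ystar) + (1 - 1/ystar) * 16 / (9*C) * R
              + 7 / (4 * C ^ α) * R := by ring
        rw [hexp]
        linarith [t0, tl, t12.trans hE, hM]
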